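/- Let p be a prime, q a power of p, f, g ∈ F_q[T], and let W_n be defined by W_0 = 0, W_1 = 1, W_n = f·W_{n-1} + g·W_{n-2}, and w_n by w_0 = 2, w_1 = f, w_n = f·w_{n-1} + g·w_{n-2}. Then for n = p^k·m, W_n = W_{p^k}·W_m^{p^k} and w_n = w_m^{p^k} in F_q[T]. -/

import Mathlib

open Polynomial

noncomputable def lucasW {R : Type*} [CommRing R] (f g : Polynomial R) : ℕ → Polynomial R
  | 0 => 0
  | 1 => 1
  | n + 2 => f * lucasW f g (n + 1) + g * lucasW f g n

noncomputable def lucasw {R : Type*} [CommRing R] (f g : Polynomial R) : ℕ → Polynomial R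
  | 0 => 2
  | 1 => f
  | n + 2 => f * lucasw f g (n + 1) + g * lucasw f g n

namespace LucasAux

variable {F : Type*} [Field F] (f g : Polynomial F)

noncomputable def q : (Polynomial F)[X] := X ^ 2 - C f * X - C g

lemma q_degree : (q f g).degree = 2 := by
  unfold q; compute_degree!

noncomputable def al : AdjoinRoot (q f g) := AdjoinRoot.root (q f g)

lemma core (c d : Polynomial F) 
    (h : AdjoinRoot.of (q f g) c * al f g + AdjoinRoot.of (q f g) d = 0) : c = 0 ∧ d = 0 := by
  have h' : AdjoinRoot.mk (q f g) (C c * X + C d) = 0 := by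
    rw [map_add, map_mul, AdjoinRoot.mk_C, AdjoinRoot.mk_X, AdjoinRoot.mk_C]; exact h
  rw [AdjoinRoot.mk_eq_zero] at h'
  have hz : (C c * X + C d : (Polynomial F)[X]) = 0 := by
    refine Polynomial.eq_zero_of_dvd_of_degree_lt h' ?_
    rw [q_degree]
    refine lt_of_le_of_lt (degree_add_le _ _) ?_
    refine max_lt (lt_of_le_of_lt (degree_mul_le _ _) ?_) (lt_of_le_of_lt (degree_C_le) ?_)
    · refine lt_of_le_of_lt (add_le_add degree_C_le degree_X_le) ?_
      norm_num
    · norm_num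
  constructor
  · have := congrArg (fun r => r.coeff 1) hz; simpa using this
  · have := congrArg (fun r => r.coeff 0) hz; simpa using this

lemma of_injective : Function.Injective (AdjoinRoot.of (q f g)) := by
  intro a b hab
  have h0 : AdjoinRoot.of (q f g) 0 * al f g + AdjoinRoot.of (q f g) (a - b) = 0 := by
    simp [map_sub, hab]
  have := (core f g 0 (a - b) h0).2
  exact sub_eq_zero.mp this

lemma hal : (al f g) ^ 2 = AdjoinRoot.of (q f g) f * al f g + AdjoinRoot.of (q f g) g := by
  have h : aeval (al f g) (q f g) = 0 := by
    rw [al, AdjoinRoot.aeval_eq, AdjoinRoot.mk_self]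
  unfold q at h
  simp only [map_sub, map_mul, map_pow, aeval_X, aeval_C, AdjoinRoot.algebraMap_eq] at h
  unfold q
  have h2 : AdjoinRoot.mk (q f g) (X ^ 2 - C f * X - C g) = 0 := AdjoinRoot.mk_self
  rw [map_sub, map_sub, map_mul, map_pow, AdjoinRoot.mk_X, AdjoinRoot.mk_C, AdjoinRoot.mk_C] at h2
  show AdjoinRoot.root (q f g) ^ 2 = AdjoinRoot.of (q f g) f * AdjoinRoot.root (q f g) + AdjoinRoot.of (q f g) g
  rw [sub_sub, sub_eq_zero] at h2
  exact h2

end LucasAux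

namespace LucasAux

variable {F : Type*} [Field F] (f g : Polynomial F)

local notation "φ" => AdjoinRoot.of (q f g)

noncomputable def be : AdjoinRoot (q f g) := AdjoinRoot.of (q f g) f - al f g

lemma hbe : (be f g) ^ 2 = AdjoinRoot.of (q f g) f * be f g + AdjoinRoot.of (q f g) g := by
  unfold be
  linear_combination (hal f g)

lemma key1 : ∀ n : ℕ, al f g ^ (n + 1) =
    φ (lucasW f g (n + 1)) * al f g + φ (g * lucasW f g n) := by
  have H : ∀ n : ℕ, (al f g ^ (n + 1) =
      φ (lucasW f g (n + 1)) * al f g + φ (g * lucasW f g n)) ∧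
      (al f g ^ (n + 2) =
      φ (lucasW f g (n + 2)) * al f g + φ (g * lucasW f g (n + 1))) := by
    intro n
    induction n with
    | zero =>
      constructor
      · simp [lucasW]
      · have : lucasW f g 2 = f * 1 + g * 0 := rfl
        rw [pow_two, this]
        simp only [mul_zero, add_zero, mul_one, lucasW]
        rw [← pow_two]
        rw [hal f g]
      
    | succ n ih =>
      refine ⟨ih.2, ?_⟩
      have h1 : al f g ^ (n + 3) = al f g ^ 2 * al f g ^ (n + 1) := by ring
      rw [h1, hal f g, ih.1]
      have h2 : lucasW f g (n + 3) = f * lucasW f g (n + 2) + g * lucasW f g (n + 1) := rfl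
      have h2' : lucasW f g (n + 2) = f * lucasW f g (n + 1) + g * lucasW f g n := rfl
      rw [h2, h2']
      simp only [map_add, map_mul]
      linear_combination (AdjoinRoot.of (q f g) f * AdjoinRoot.of (q f g) (lucasW f g (n+1))) * hal f g
  exact fun n => (H n).1

lemma key2 : ∀ n : ℕ, φ (lucasw f g n) = al f g ^ n + be f g ^ n := by
  have H : ∀ n : ℕ, (φ (lucasw f g n) = al f g ^ n + be f g ^ n) ∧
      (φ (lucasw f g (n + 1)) = al f g ^ (n + 1) + be f g ^ (n + 1)) := by
    intro n
    induction n with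
    | zero =>
      constructor
      · show AdjoinRoot.of (q f g) 2 = _
        rw [show (2:Polynomial F) = 1 + 1 by norm_num, map_add, map_one]
        simp
      · simp only [lucasw, pow_one, be]; ring
    | succ n ih =>
      refine ⟨ih.2, ?_⟩
      have h2 : lucasw f g (n + 2) = f * lucasw f g (n + 1) + g * lucasw f g n := rfl
      rw [h2, map_add, map_mul, map_mul, ih.1, ih.2]
      have ha : al f g ^ (n + 2) = al f g ^ 2 * al f g ^ n := by ring
      have hb : be f g ^ (n + 2) = be f g ^ 2 * be f g ^ n := by ring
      rw [ha, hb, hal f g, hbe f g]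
      ring
  exact fun n => (H n).1

end LucasAux

namespace LucasAux

variable (p : ℕ) [Fact p.Prime] {F : Type*} [Field F] [CharP F p] (f g : Polynomial F)

lemma charP_A : CharP (AdjoinRoot (q f g)) p :=
  charP_of_injective_ringHom (of_injective f g) p

lemma w_step (m : ℕ) : lucasw f g (p * m) = (lucasw f g m) ^ p := by
  haveI := charP_A p f g
  apply of_injective f g
  rw [map_pow, key2, key2, mul_comm p m, pow_mul, pow_mul, add_pow_char]

lemma W_step (m : ℕ) : lucasW f g (p * m) = lucasW f g p * (lucasW f g m) ^ p := by
  haveI := charP_A p f g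
  have hp : 0 < p := (Fact.out (p := p.Prime)).pos
  rcases m with _ | j
  · simp [lucasW, zero_pow hp.ne']
  obtain ⟨t, ht⟩ : ∃ t, p = t + 1 := ⟨p - 1, by omega⟩
  obtain ⟨s, hs⟩ : ∃ s, p * (j + 1) = s + 1 := ⟨p * (j + 1) - 1, (Nat.succ_pred_eq_of_pos (Nat.mul_pos hp (Nat.succ_pos j))).symm⟩
  have e1 := key1 f g j
  have e2 := key1 f g t
  have e3 := key1 f g s
  rw [← ht] at e2
  rw [← hs] at e3
  -- α^(p*(j+1)) = (α^(j+1))^p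
  have e4 : al f g ^ (p * (j + 1)) = (al f g ^ (j + 1)) ^ p := by
    rw [mul_comm, pow_mul]
  rw [e3, e1] at e4
  rw [add_pow_char, mul_pow, ← map_pow, ← map_pow, e2] at e4
  -- e4 : φ W_{p(j+1)} * α + φ(g W_s) = φ(W_{j+1}^p) * (φ W_p * α + φ (g W_t)) + φ ((g W_j)^p)
  have hc : AdjoinRoot.of (q f g)
        (lucasW f g (p * (j + 1)) - lucasW f g (j + 1) ^ p * lucasW f g p) * al f g +
      AdjoinRoot.of (q f g)
        (g * lucasW f g s - (lucasW f g (j + 1) ^ p * (g * lucasW f g t) +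
          (g * lucasW f g j) ^ p)) = 0 := by
    simp only [map_sub, map_add, map_mul] at e4 ⊢
    linear_combination e4
  have := (core f g _ _ hc).1
  have h5 : lucasW f g (p * (j + 1)) = lucasW f g (j + 1) ^ p * lucasW f g p :=
    sub_eq_zero.mp this
  rw [h5]; ring

end LucasAux

theorem lucas_seq_prime_pow_factor (p : ℕ) [Fact p.Prime]
    (F : Type*) [Field F] [Fintype F] [CharP F p] (f g : Polynomial F) (k m : ℕ) :
    lucasW f g (p ^ k * m) = lucasW f g (p ^ k) * (lucasW f g m) ^ (p ^ k) ∧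
      lucasw f g (p ^ k * m) = (lucasw f g m) ^ (p ^ k) := by
  induction k with
  | zero => simp [lucasW]
  | succ k ih =>
    obtain ⟨h1, h2⟩ := ih
    constructor
    · have ha : p ^ (k + 1) * m = p * (p ^ k * m) := by ring
      have hb : p ^ (k + 1) = p * p ^ k := by ring
      rw [ha, LucasAux.W_step, h1, hb, LucasAux.W_step p f g (p ^ k), mul_pow,
        ← pow_mul (lucasW f g m) (p ^ k) p, mul_comm (p ^ k) p]
      ring
    · have ha : p ^ (k + 1) * m = p * (p ^ k * m) := by ring
      rw [ha, LucasAux.w_step, h2, ← pow_mul, ← pow_succ]
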